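/- Let d_1, d_2 be unit vectors in ℂ^m, u_1, u_2 unit vectors in ℂ², and 0 ≤ p ≤ 1; write c_d = |⟨d_1, d_2⟩|² and c_u = |⟨u_1, u_2⟩|². For the two-path pure bipartite input state ψ_AB = √p · e_1 ⊗ u_1 + √(1−p) · e_2 ⊗ u_2 with reduced state ρ_A ((ρ_A)_{ik} = √(p_i p_k) ⟨u_k, u_i⟩ for the probability vector (p, 1−p)) and post-interaction bipartite state ρ̃_AB = Σ_{i,j} √(p_i p_j) ⟨d_j, d_i⟩ (e_i e_j^*) ⊗ (u_i u_j^*), one has the two identities: (P_s − 1/2)² + V(ρ̃_A)² + E(ψ_AB)² = 1/4 + p(1−p)(c_u − 1)(c_d − 1), and 3/4 − (1/2)·Tr(ρ̃_AB²) = 1/4 + p(1−p)(1 − c_d). -/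

import Mathlib

open Matrix ComplexOrder

noncomputable section

/-- Inner product ⟨a, b⟩ = ∑ i, conj (a i) * b i on a finite-dimensional complex space. -/
def ip {k : Type*} [Fintype k] (a b : k → ℂ) : ℂ := ∑ i, star (a i) * b i

/-- The optimal success probability of minimum-error discrimination of the detector
states `d i` with prior probabilities `q i`: the supremum over all POVMs
`Pov` (positive semidefinite matrices summing to the identity) of
`∑ i, q i * ⟨d i, Pov i (d i)⟩`. -/
def Ps {m n : ℕ} (d : Fin n → Fin m → ℂ) (q : Fin n → ℝ) : ℝ :=
  sSup { x : ℝ | ∃ Pov : Fin n → Matrix (Fin m) (Fin m) ℂ,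
    (∀ i, (Pov i).PosSemidef) ∧ (∑ i, Pov i) = 1 ∧
    x = ∑ i, q i * (ip (d i) ((Pov i) *ᵥ (d i))).re }

/-- The visibility `V(ρ̃_A) = √( (2(n−1)/n²) ∑_{i≠k} |⟨d_k, d_i⟩|² |(ρ_A)_{ik}|² )`. -/
def Vis {m n : ℕ} (d : Fin n → Fin m → ℂ) (ρ : Matrix (Fin n) (Fin n) ℂ) : ℝ :=
  Real.sqrt ((2 * ((n : ℝ) - 1) / (n : ℝ) ^ 2) *
    ∑ i, ∑ k, if i = k then 0 else ‖ip (d k) (d i)‖ ^ 2 * ‖ρ i k‖ ^ 2)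

/-- The post-interaction detector state `ρ̃_D = ∑ i, q i • d i (d i)^*`. -/
def detState {m n : ℕ} (d : Fin n → Fin m → ℂ) (q : Fin n → ℝ) :
    Matrix (Fin m) (Fin m) ℂ :=
  ∑ i, (q i : ℂ) • vecMulVec (d i) (star (d i))

/-- The post-interaction particle state `(ρ̃_A)_{ik} = ⟨d_k, d_i⟩ (ρ_A)_{ik}`. -/
def post {m n : ℕ} (d : Fin n → Fin m → ℂ) (ρ : Matrix (Fin n) (Fin n) ℂ) :
    Matrix (Fin n) (Fin n) ℂ :=
  Matrix.of fun i k => ip (d k) (d i) * ρ i k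

/-- The purity `Tr(ρ²)` (as a real number). -/
def purity {k : Type*} [Fintype k] (ρ : Matrix k k ℂ) : ℝ := ((ρ * ρ).trace).re

/-- Partial trace over the second tensor factor: `(Tr_B ρ)_{ik} = ∑ j, ρ_{(i,j),(k,j)}`. -/
def ptraceB {n : ℕ} (ρ : Matrix (Fin n × Fin n) (Fin n × Fin n) ℂ) :
    Matrix (Fin n) (Fin n) ℂ :=
  Matrix.of fun i k => ∑ j, ρ (i, j) (k, j)

lemma ip_expand {k : Type*} [Fintype k] (a b : k → ℂ) (A B C D : ℂ) :
    ip (fun i => A * a i + B * b i) (fun i => C * a i + D * b i)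
      = star A * C * ip a a + star A * D * ip a b + star B * C * ip b a + star B * D * ip b b := by
  simp only [ip, Finset.mul_sum, ← Finset.sum_add_distrib]
  refine Finset.sum_congr rfl fun i _ => ?_
  simp only [star_add, star_mul']
  ring

lemma ip_conj {k : Type*} [Fintype k] (a b : k → ℂ) : star (ip a b) = ip b a := by
  simp only [ip, star_sum, star_mul', star_star]
  exact Finset.sum_congr rfl fun i _ => mul_comm _ _

lemma ip_inner {k : Type*} [Fintype k] (a b : k → ℂ) :
    ip a b = @inner ℂ (EuclideanSpace ℂ k) _ (WithLp.toLp 2 a) (WithLp.toLp 2 b) := by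
  simp [ip, PiLp.inner_apply, RCLike.inner_apply, mul_comm]

lemma ip_self_re {k : Type*} [Fintype k] (a : k → ℂ) :
    (ip a a).re = ‖(WithLp.toLp 2 a : EuclideanSpace ℂ k)‖ ^ 2 := by
  rw [ip_inner, inner_self_eq_norm_sq_to_K]
  simp [← Complex.ofReal_pow]

lemma ip_cauchy {k : Type*} [Fintype k] (a b : k → ℂ) :
    ‖ip a b‖ ^ 2 ≤ (ip a a).re * (ip b b).re := by
  have h := norm_inner_le_norm (𝕜 := ℂ) (WithLp.toLp 2 a : EuclideanSpace ℂ k) (WithLp.toLp 2 b : EuclideanSpace ℂ k)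
  rw [ip_inner, ip_self_re, ip_self_re]
  have := mul_self_le_mul_self (norm_nonneg (@inner ℂ (EuclideanSpace ℂ k) _ (WithLp.toLp 2 a) (WithLp.toLp 2 b))) h
  nlinarith [this]

lemma ip_mul_psd {m : ℕ} (B : Matrix (Fin m) (Fin m) ℂ) (x y : Fin m → ℂ) :
    ip x ((Bᴴ * B) *ᵥ y) = ip (B *ᵥ x) (B *ᵥ y) := by
  have h : ∀ a b : Fin m → ℂ, ip a b = dotProduct (star a) b := fun a b => rfl
  rw [h, h, ← mulVec_mulVec, dotProduct_mulVec, star_mulVec]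

lemma ip_self_re_nonneg {k : Type*} [Fintype k] (a : k → ℂ) : 0 ≤ (ip a a).re := by
  rw [ip_self_re]; positivity

set_option maxHeartbeats 1000000 in

lemma key_ineq (p c s X Y R q l D : ℝ)
    (hq : q = 1 - p) (hl : l = (p - q + s)/2) (hD : D = (l+q)^2 - q*c*(2*l+q))
    (hp0 : 0 ≤ p) (hp1 : p ≤ 1) (hc0 : 0 ≤ c) (hc1 : c ≤ 1) (hs0 : 0 ≤ s)
    (hs2 : s^2 = 1 - 4*p*q*c) (hX : 0 ≤ X) (hY : 0 ≤ Y) (hR : R^2 ≤ c*(X*Y))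
    (hF : (l+q)^2*X + q^2*c*Y - 2*q*(l+q)*R ≤ D) :
    p*X - q*Y ≤ l := by
  have hq0 : 0 ≤ q := by linarith
  have hpqc : 0 ≤ p*q*(1-c) :=
    mul_nonneg (mul_nonneg hp0 hq0) (sub_nonneg.2 hc1)
  have hl0 : 0 ≤ l := by
    nlinarith [hs2, hs0, hpqc, hl, hq, sq_nonneg (q - p - s), sq_nonneg (q - p + s)]
  have hD2 : D = l^2 + q*(1-c)*(2*l+q) := by rw [hD]; ring
  by_cases hDpos : 0 < D
  · have hK1 : l*(l+q)^2 - p*D = p*q*c*l := by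
      rw [hD, hl, hq]; rw [hq] at hs2
      linear_combination ((s+1)/8) * hs2
    have hK20 : 0 ≤ l*q^2*c + q*D :=
      add_nonneg (mul_nonneg (mul_nonneg hl0 (sq_nonneg q)) hc0)
        (mul_nonneg hq0 hDpos.le)
    have hK10 : 0 ≤ p*q*c*l := by
      have := mul_nonneg (mul_nonneg (mul_nonneg hp0 hq0) hc0) hl0; linarith
    have hKK : (p*q*c*l)*(l*q^2*c + q*D) = (l*q*(l+q))^2*c := by
      rw [hD, hl, hq]; rw [hq] at hs2
      linear_combination ((1/16)*c - (1/16)*c*s^2 - (1/4)*p*c - (1/8)*p*c*s + (1/8)*p*c*s^2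
        + (5/16)*p^2*c + (1/4)*p^2*c*s - (1/16)*p^2*c*s^2 - (1/8)*p^3*c - (1/8)*p^3*c*s) * hs2
    have hS0 : 0 ≤ (p*q*c*l)*X + (l*q^2*c + q*D)*Y :=
      add_nonneg (mul_nonneg hK10 hX) (mul_nonneg hK20 hY)
    have hsq : (2*(l*q*(l+q))*R)^2 ≤ ((p*q*c*l)*X + (l*q^2*c + q*D)*Y)^2 := by
      nlinarith [sq_nonneg ((p*q*c*l)*X - (l*q^2*c + q*D)*Y), hR, sq_nonneg (l*q*(l+q)),
        mul_nonneg hX hY, hKK]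
    have hE : 0 ≤ (p*q*c*l)*X + (l*q^2*c + q*D)*Y - 2*(l*q*(l+q))*R := by
      rcases le_or_gt (2*(l*q*(l+q))*R) 0 with h | h
      · linarith
      · nlinarith [hsq, hS0, h]
    have h2 : 0 ≤ (l*(l+q)^2 - p*D)*X + (l*q^2*c + q*D)*Y - 2*(l*q*(l+q))*R := by
      rw [hK1]; linarith
    have h1 : l*((l+q)^2*X + q^2*c*Y - 2*q*(l+q)*R) ≤ l*D :=
      mul_le_mul_of_nonneg_left hF hl0
    have h3 : D*(p*X - q*Y) ≤ D*l := by linarith [h1, h2]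
    exact le_of_mul_le_mul_left h3 hDpos
  · push_neg at hDpos
    have h2l : 0 ≤ 2*l + q := by linarith
    have hterm : 0 ≤ q*(1-c)*(2*l+q) :=
      mul_nonneg (mul_nonneg hq0 (sub_nonneg.2 hc1)) h2l
    have hl2 : l^2 = 0 := le_antisymm (by nlinarith [hD2]) (sq_nonneg l)
    have hl02 : l = 0 := pow_eq_zero_iff two_ne_zero |>.mp hl2
    have hq2c : q*(1-c)*(2*l+q) = 0 := le_antisymm (by nlinarith [hD2, sq_nonneg l]) hterm
    have hqpos : 0 < q := by
      rcases eq_or_lt_of_le hq0 with h0 | h0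
      · exfalso
        have hp' : p = 1 := by rw [← h0] at hq; linarith
        rw [hl, ← h0, hp'] at hl02
        linarith
      · exact h0
    have hc1' : c = 1 := by
      have h4 : (1 - c)*(q*(2*l+q)) = 0 := by linarith [hq2c]
      rcases mul_eq_zero.mp h4 with h | h
      · linarith
      · exfalso; nlinarith [hqpos, hl0]
    have hple : p ≤ q := by rw [hl] at hl02; linarith
    subst hl02; subst hc1'
    have hF' : q^2*(X + Y - 2*R) ≤ 0 := by nlinarith [hF, hDpos]
    have hXYR : X + Y ≤ 2*R := by nlinarith [hF', mul_pos hqpos hqpos]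
    have hR0 : 0 ≤ R := by linarith
    have hsqr : (X+Y)^2 ≤ 4*R^2 := by nlinarith [hXYR, hX, hY]
    have hd0 : (X-Y)^2 ≤ 0 := by nlinarith [hR]
    have hXY : X - Y = 0 := pow_eq_zero_iff two_ne_zero |>.mp (le_antisymm hd0 (sq_nonneg _))
    have h5 : (q - p)*X ≥ 0 := mul_nonneg (by linarith) hX
    nlinarith [h5, hXY]

lemma ip_sub_right {k : Type*} [Fintype k] (a b c : k → ℂ) :
    ip a (b - c) = ip a b - ip a c := by
  simp [ip, mul_sub, Finset.sum_sub_distrib]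

lemma ip_smul_right {k : Type*} [Fintype k] (a b : k → ℂ) (z : ℂ) :
    ip a (fun i => z * b i) = z * ip a b := by
  simp only [ip, Finset.mul_sum]
  exact Finset.sum_congr rfl fun i _ => by ring

lemma ip_real {k : Type*} [Fintype k] (a : k → ℂ) : ip a a = ((ip a a).re : ℂ) :=
  (Complex.conj_eq_iff_re.mp (ip_conj a a)).symm

lemma dot_ip {k : Type*} [Fintype k] (x y : k → ℂ) : dotProduct (star x) y = ip x y := rfl

lemma mulVec_comb {m : ℕ} (B : Matrix (Fin m) (Fin m) ℂ) (x y : Fin m → ℂ) (A C : ℂ) :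
    B *ᵥ (fun i => A * x i + C * y i) = fun i => A * (B *ᵥ x) i + C * (B *ᵥ y) i := by
  funext i
  simp only [mulVec, dotProduct, Finset.mul_sum, ← Finset.sum_add_distrib]
  exact Finset.sum_congr rfl fun j _ => by ring

lemma vecMulVec_mulVec {m : ℕ} (v x : Fin m → ℂ) :
    (vecMulVec v (star v)) *ᵥ x = fun i => ip v x * v i := by
  funext i
  simp only [vecMulVec_apply, mulVec, dotProduct, ip, Finset.sum_mul, Pi.star_apply]
  exact Finset.sum_congr rfl fun j _ => by ring

lemma complex_re_nonneg {z : ℂ} (h : 0 ≤ z) : 0 ≤ z.re := by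
  rw [Complex.le_def] at h; simpa using h.1

lemma complex_ofReal_nonneg {r : ℝ} (h : 0 ≤ r) : (0 : ℂ) ≤ (r : ℂ) := by
  rw [Complex.le_def]; simp [h]


-- Degenerate-case helper
lemma Dnonpos_lzero (p c s q l D : ℝ)
    (hq : q = 1 - p) (hl : l = (p - q + s)/2) (hD : D = (l+q)^2 - q*c*(2*l+q))
    (hp0 : 0 ≤ p) (hp1 : p ≤ 1) (hc0 : 0 ≤ c) (hc1 : c ≤ 1) (hs0 : 0 ≤ s)
    (hs2 : s^2 = 1 - 4*p*q*c) (hDn : D ≤ 0) : l = 0 := by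
  have hq0 : 0 ≤ q := by linarith
  have hpqc : 0 ≤ p*q*(1-c) :=
    mul_nonneg (mul_nonneg hp0 hq0) (sub_nonneg.2 hc1)
  have hl0 : 0 ≤ l := by
    nlinarith [hs2, hs0, hpqc, hl, hq, sq_nonneg (q - p - s), sq_nonneg (q - p + s)]
  have hD2 : D = l^2 + q*(1-c)*(2*l+q) := by rw [hD]; ring
  have h2l : 0 ≤ 2*l + q := by linarith
  have hterm : 0 ≤ q*(1-c)*(2*l+q) :=
    mul_nonneg (mul_nonneg hq0 (sub_nonneg.2 hc1)) h2l
  have hl2 : l^2 = 0 := le_antisymm (by nlinarith [hD2]) (sq_nonneg l)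
  exact pow_eq_zero_iff two_ne_zero |>.mp hl2

lemma ip_comb_left {k : Type*} [Fintype k] (a b x : k → ℂ) (A C : ℂ) :
    ip (fun i => A * a i + C * b i) x = star A * ip a x + star C * ip b x := by
  simp only [ip, Finset.mul_sum, ← Finset.sum_add_distrib]
  refine Finset.sum_congr rfl fun i _ => ?_
  simp only [star_add, star_mul']
  ring

lemma helstrom {m : ℕ} (d : Fin 2 → Fin m → ℂ) (hd : ∀ i, ip (d i) (d i) = 1)
    (p : ℝ) (hp0 : 0 ≤ p) (hp1 : p ≤ 1) :
    Ps d ![p, 1 - p] = (1 + Real.sqrt (1 - 4*p*(1-p)*‖ip (d 0) (d 1)‖^2))/2 := by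
  obtain ⟨g, hg⟩ : ∃ g : ℂ, g = ip (d 0) (d 1) := ⟨_, rfl⟩
  obtain ⟨c, hc⟩ : ∃ c : ℝ, c = ‖g‖^2 := ⟨_, rfl⟩
  rw [← hg, ← hc]
  have hc0 : 0 ≤ c := by rw [hc]; positivity
  have hgc : (starRingEnd ℂ) g * g = (c : ℂ) := by
    rw [hc, mul_comm, Complex.mul_conj, Complex.normSq_eq_norm_sq]
  have hg10 : ip (d 1) (d 0) = (starRingEnd ℂ) g := by
    rw [hg, ← Complex.star_def]; exact (ip_conj (d 0) (d 1)).symm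
  have hc1 : c ≤ 1 := by
    have h0 := ip_self_re_nonneg (fun i => (1:ℂ) * d 0 i + (- (starRingEnd ℂ) g) * d 1 i)
    rw [ip_expand, hd 0, hd 1, hg10, ← hg] at h0
    have h1 : (star (1:ℂ) * 1 * 1 + star (1:ℂ) * (-(starRingEnd ℂ) g) * g
        + star (-(starRingEnd ℂ) g) * 1 * (starRingEnd ℂ) g
        + star (-(starRingEnd ℂ) g) * (-(starRingEnd ℂ) g) * 1) = ((1 - c : ℝ) : ℂ) := by
      simp only [star_neg, star_star, star_one, Complex.star_def, Complex.conj_conj]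
      push_cast
      linear_combination (-1 : ℂ) * hgc
    rw [h1] at h0
    simpa using h0
  have hq0 : (0:ℝ) ≤ 1 - p := by linarith
  have h4pq : 0 ≤ 1 - 4*p*(1-p)*c := by
    nlinarith [sq_nonneg (p - (1-p)), mul_nonneg (mul_nonneg hp0 hq0) (sub_nonneg.2 hc1)]
  obtain ⟨s, hs⟩ : ∃ s : ℝ, s = Real.sqrt (1 - 4*p*(1-p)*c) := ⟨_, rfl⟩
  rw [← hs]
  have hs0 : 0 ≤ s := hs ▸ Real.sqrt_nonneg _
  have hs2 : s^2 = 1 - 4*p*(1-p)*c := by rw [hs]; exact Real.sq_sqrt h4pq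
  obtain ⟨l, hl⟩ : ∃ l : ℝ, l = (p - (1-p) + s)/2 := ⟨_, rfl⟩
  obtain ⟨D, hD⟩ : ∃ D : ℝ, D = (l+(1-p))^2 - (1-p)*c*(2*l+(1-p)) := ⟨_, rfl⟩
  obtain ⟨v, hv⟩ : ∃ v : Fin m → ℂ,
      v = fun i => ((l+(1-p) : ℝ) : ℂ) * d 0 i + (-((1-p : ℝ) : ℂ) * (starRingEnd ℂ) g) * d 1 i :=
    ⟨_, rfl⟩
  have hvv : ip v v = (D : ℂ) := by
    rw [hv, ip_expand, hd 0, hd 1, ← hg, hg10, hD]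
    simp only [star_neg, star_mul', star_star, Complex.star_def, Complex.conj_ofReal, Complex.conj_conj]
    push_cast
    linear_combination ((-2 : ℂ)*((l:ℂ)+(1-(p:ℂ)))*((1:ℂ)-(p:ℂ)) + ((1:ℂ)-(p:ℂ))^2) * hgc
  have hvd0 : ip v (d 0) = ((l + (1-p) - (1-p)*c : ℝ) : ℂ) := by
    rw [hv, ip_comb_left, hd 0, hg10]
    simp only [star_neg, star_mul', star_star, Complex.star_def, Complex.conj_ofReal, Complex.conj_conj]
    push_cast
    linear_combination (-((1:ℂ)-(p:ℂ))) * hgc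
  have hvd1 : ip v (d 1) = ((l : ℝ) : ℂ) * g := by
    rw [hv, ip_comb_left, hd 1, ← hg]
    simp only [star_neg, star_mul', star_star, Complex.star_def, Complex.conj_ofReal, Complex.conj_conj]
    push_cast
    ring
  have key : IsGreatest { x : ℝ | ∃ Pov : Fin 2 → Matrix (Fin m) (Fin m) ℂ,
      (∀ i, (Pov i).PosSemidef) ∧ (∑ i, Pov i) = 1 ∧
      x = ∑ i, (![p, 1-p] : Fin 2 → ℝ) i * (ip (d i) ((Pov i) *ᵥ (d i))).re } ((1+s)/2) := by
    constructor
    · -- membership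
      by_cases hDpos : 0 < D
      · have hDne : D ≠ 0 := ne_of_gt hDpos
        obtain ⟨P0, hP0⟩ : ∃ P0 : Matrix (Fin m) (Fin m) ℂ, P0 = ((D⁻¹ : ℝ) : ℂ) • vecMulVec v (star v) := ⟨_, rfl⟩
        have hquad : ∀ x : Fin m → ℂ,
            dotProduct (star x) (P0 *ᵥ x) = ((D⁻¹ * Complex.normSq (ip v x) : ℝ) : ℂ) := by
          intro x
          rw [hP0, smul_mulVec, dotProduct_smul, vecMulVec_mulVec, dot_ip,
            ip_smul_right, ← ip_conj v x, Complex.star_def, Complex.mul_conj, smul_eq_mul]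
          push_cast
          ring
        have hP0psd : P0.PosSemidef := by
          refine Matrix.PosSemidef.of_dotProduct_mulVec_nonneg ?_ ?_
          · ext i j
            simp only [hP0, Matrix.conjTranspose_apply, Matrix.smul_apply, vecMulVec_apply,
              Pi.star_apply, smul_eq_mul, _root_.map_mul, Complex.star_def, Complex.conj_conj,
              Complex.conj_ofReal]
            ring
          · intro x
            rw [hquad]
            exact complex_ofReal_nonneg
              (mul_nonneg (inv_nonneg.2 hDpos.le) (Complex.normSq_nonneg _))
        have hP1psd : ((1 : Matrix (Fin m) (Fin m) ℂ) - P0).PosSemidef := by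
          refine Matrix.PosSemidef.of_dotProduct_mulVec_nonneg ?_ ?_
          · exact Matrix.isHermitian_one.sub hP0psd.1
          · intro x
            rw [sub_mulVec, one_mulVec, dotProduct_sub, hquad, dot_ip, ip_real x]
            have hCS : ‖ip v x‖^2 ≤ D * (ip x x).re := by
              have h6 := ip_cauchy v x
              rw [hvv] at h6
              simpa using h6
            have hns : Complex.normSq (ip v x) = ‖ip v x‖^2 := by
              rw [Complex.normSq_eq_norm_sq]
            have h7 : D⁻¹ * Complex.normSq (ip v x) ≤ (ip x x).re := by
              rw [hns]
              rw [inv_mul_le_iff₀ hDpos]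
              linarith [hCS]
            have h8 : (0:ℝ) ≤ (ip x x).re - D⁻¹ * Complex.normSq (ip v x) := by linarith
            calc (0:ℂ) ≤ (((ip x x).re - D⁻¹ * Complex.normSq (ip v x) : ℝ) : ℂ) :=
                  complex_ofReal_nonneg h8
              _ = _ := by push_cast; ring
        refine ⟨![P0, 1 - P0], ?_, ?_, ?_⟩
        · intro i; fin_cases i
          · simpa using hP0psd
          · simpa using hP1psd
        · rw [Fin.sum_univ_two]
          simp only [Matrix.cons_val_zero, Matrix.cons_val_one, Matrix.head_cons]
          abel
        · have hdv0 : ip (d 0) v = ((l + (1-p) - (1-p)*c : ℝ) : ℂ) := by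
            rw [← ip_conj v (d 0), hvd0, Complex.star_def, Complex.conj_ofReal]
          have hdv1 : ip (d 1) v = ((l : ℝ) : ℂ) * (starRingEnd ℂ) g := by
            rw [← ip_conj v (d 1), hvd1, Complex.star_def, _root_.map_mul, Complex.conj_ofReal]
          have ht0 : ip (d 0) (P0 *ᵥ d 0) = ((D⁻¹ * (l + (1-p) - (1-p)*c)^2 : ℝ) : ℂ) := by
            rw [← dot_ip, hP0, smul_mulVec, dotProduct_smul, vecMulVec_mulVec, dot_ip,
              ip_smul_right, hvd0, hdv0, smul_eq_mul]
            push_cast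
            ring
          have ht1 : ip (d 1) ((1 - P0) *ᵥ d 1) = ((1 - D⁻¹ * (l^2 * c) : ℝ) : ℂ) := by
            rw [sub_mulVec, one_mulVec, ip_sub_right, hd 1, ← dot_ip, hP0, smul_mulVec,
              dotProduct_smul, vecMulVec_mulVec, dot_ip, ip_smul_right, hvd1, hdv1]
            have : (((l : ℝ) : ℂ) * g) * (((l : ℝ) : ℂ) * (starRingEnd ℂ) g)
                = ((l^2 * c : ℝ) : ℂ) := by
              push_cast
              linear_combination ((l:ℂ))^2 * hgc
            rw [smul_eq_mul, this]
            push_cast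
            ring
          have hE2 : p*(l + (1-p) - (1-p)*c)^2 - (1-p)*(l^2*c) = l*D := by
            rw [hD, hl]
            linear_combination (-(1+s)/8 + c*(1-p)/4) * hs2
          have h9 : p*(D⁻¹*(l + (1-p) - (1-p)*c)^2) + (1-p)*(1 - D⁻¹*(l^2*c)) = (1-p) + l := by
            field_simp
            linear_combination hE2
          have h10 : (1+s)/2 = (1-p) + l := by rw [hl]; ring
          rw [Fin.sum_univ_two]
          simp only [Matrix.cons_val_zero, Matrix.cons_val_one, Matrix.head_cons, ht0, ht1,
            Complex.ofReal_re]
          rw [h10, ← h9]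
      · push_neg at hDpos
        have hl00 : l = 0 :=
          Dnonpos_lzero p c s (1-p) l D rfl hl hD hp0 hp1 hc0 hc1 hs0 hs2 hDpos
        refine ⟨![0, 1], ?_, ?_, ?_⟩
        · intro i; fin_cases i
          · simpa using (Matrix.PosSemidef.zero : (0 : Matrix (Fin m) (Fin m) ℂ).PosSemidef)
          · simpa using (Matrix.PosSemidef.one : (1 : Matrix (Fin m) (Fin m) ℂ).PosSemidef)
        · rw [Fin.sum_univ_two]
          simp only [Matrix.cons_val_zero, Matrix.cons_val_one, Matrix.head_cons]
          abel
        · rw [Fin.sum_univ_two]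
          have hz : ip (d 0) ((0 : Matrix (Fin m) (Fin m) ℂ) *ᵥ d 0) = 0 := by
            rw [zero_mulVec]
            simp [ip]
          have ho : ip (d 1) ((1 : Matrix (Fin m) (Fin m) ℂ) *ᵥ d 1) = 1 := by
            rw [one_mulVec, hd 1]
          simp only [Matrix.cons_val_zero, Matrix.cons_val_one, Matrix.head_cons, hz, ho,
            Complex.zero_re, Complex.one_re]
          rw [hl] at hl00
          linarith
    · -- upper bound
      rintro x ⟨Pov, hPSD, hsum, rfl⟩
      have h10 : Pov 1 = 1 - Pov 0 := by
        rw [Fin.sum_univ_two] at hsum; exact eq_sub_of_add_eq' hsum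
      obtain ⟨B, hB⟩ : ∃ B : Matrix (Fin m) (Fin m) ℂ, Pov 0 = Bᴴ * B := by
        open MatrixOrder in
        obtain ⟨B, hB'⟩ := CStarAlgebra.nonneg_iff_eq_star_mul_self.mp (hPSD 0).nonneg
        exact ⟨B, hB'⟩
      obtain ⟨a, ha⟩ : ∃ a : Fin m → ℂ, a = B *ᵥ d 0 := ⟨_, rfl⟩
      obtain ⟨b, hb⟩ : ∃ b : Fin m → ℂ, b = B *ᵥ d 1 := ⟨_, rfl⟩
      obtain ⟨X, hX'⟩ : ∃ X : ℝ, X = (ip a a).re := ⟨_, rfl⟩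
      obtain ⟨Y, hY'⟩ : ∃ Y : ℝ, Y = (ip b b).re := ⟨_, rfl⟩
      obtain ⟨Z, hZ'⟩ : ∃ Z : ℂ, Z = ip a b := ⟨_, rfl⟩
      obtain ⟨R, hR'⟩ : ∃ R : ℝ, R = ((starRingEnd ℂ) g * Z).re := ⟨_, rfl⟩
      have hX : 0 ≤ X := by rw [hX']; exact ip_self_re_nonneg a
      have hY : 0 ≤ Y := by rw [hY']; exact ip_self_re_nonneg b
      have hZ : ‖Z‖^2 ≤ X*Y := by rw [hZ', hX', hY']; exact ip_cauchy a b
      have hR : R^2 ≤ c*(X*Y) := by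
        have h1 : |R| ≤ ‖(starRingEnd ℂ) g * Z‖ := by
          rw [hR']; exact Complex.abs_re_le_norm _
        have h2 : ‖(starRingEnd ℂ) g * Z‖^2 = c * ‖Z‖^2 := by
          rw [norm_mul, RCLike.norm_conj, mul_pow, hc]
        nlinarith [mul_self_le_mul_self (abs_nonneg R) h1, sq_abs R, h2,
          mul_le_mul_of_nonneg_left hZ hc0]
      have hval0 : ip (d 0) (Pov 0 *ᵥ d 0) = ip a a := by rw [hB, ip_mul_psd, ← ha]
      have hval1 : ip (d 1) (Pov 1 *ᵥ d 1) = 1 - ip b b := by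
        rw [h10, sub_mulVec, one_mulVec, ip_sub_right, hd 1, hB, ip_mul_psd, ← hb]
      have hBv : B *ᵥ v = fun i => ((l+(1-p) : ℝ) : ℂ) * a i + (-((1-p : ℝ) : ℂ) * (starRingEnd ℂ) g) * b i := by
        rw [hv, mulVec_comb, ← ha, ← hb]
      have hRc : (starRingEnd ℂ) g * Z + g * (starRingEnd ℂ) Z = 2*((R : ℝ) : ℂ) := by
        have h3 := Complex.add_conj ((starRingEnd ℂ) g * Z)
        rw [_root_.map_mul (starRingEnd ℂ), Complex.conj_conj] at h3
        push_cast at h3 ⊢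
        rw [hR']
        linear_combination h3
      have hipBvC : ip (B *ᵥ v) (B *ᵥ v)
          = (((l+(1-p))^2*X + (1-p)^2*c*Y - 2*(1-p)*(l+(1-p))*R : ℝ) : ℂ) := by
        rw [hBv, ip_expand, ip_real a, ip_real b, ← ip_conj a b, ← hX', ← hY', ← hZ']
        simp only [star_neg, star_mul', star_star, Complex.star_def, Complex.conj_ofReal, Complex.conj_conj]
        push_cast
        linear_combination (-(((l:ℂ)+(1-(p:ℂ))))*((1:ℂ)-(p:ℂ))) * hRc
          + (((1:ℂ)-(p:ℂ))^2*(Y:ℂ)) * hgc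
      have hpos := (hPSD 1).dotProduct_mulVec_nonneg v
      rw [h10, dot_ip, sub_mulVec, one_mulVec, ip_sub_right, hB, ip_mul_psd, hvv] at hpos
      have hpos' : (ip (B *ᵥ v) (B *ᵥ v)).re ≤ D := by
        have h5 := complex_re_nonneg hpos
        simp only [Complex.sub_re, Complex.ofReal_re] at h5
        linarith
      rw [hipBvC] at hpos'
      simp only [Complex.ofReal_re] at hpos'
      have hkey := key_ineq p c s X Y R (1-p) l D rfl (by rw [hl]) (by rw [hD])
        hp0 hp1 hc0 hc1 hs0 (by rw [hs2]) hX hY hR hpos'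
      rw [Fin.sum_univ_two]
      simp only [Matrix.cons_val_zero, Matrix.cons_val_one, Matrix.head_cons, hval0, hval1,
        Complex.sub_re, Complex.one_re, ← hX', ← hY']
      linarith [hkey, hl]
  have hfin : Ps d ![p, 1 - p] = (1+s)/2 := key.csSup_eq
  rw [hfin]

/-- explicit evaluation of the two sides of the triality relation for the
two-path pure bipartite input state `ψ_AB = √p e₁ ⊗ u₁ + √(1−p) e₂ ⊗ u₂`. -/
theorem stmt17 (m : ℕ) (d : Fin 2 → Fin m → ℂ)
    (hd : ∀ i, ip (d i) (d i) = 1)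
    (u : Fin 2 → Fin 2 → ℂ) (hu : ∀ i, ip (u i) (u i) = 1)
    (p : ℝ) (hp0 : 0 ≤ p) (hp1 : p ≤ 1)
    (cd cu : ℝ) (hcd : cd = ‖ip (d 0) (d 1)‖ ^ 2) (hcu : cu = ‖ip (u 0) (u 1)‖ ^ 2)
    -- the prior probability vector (p, 1 − p)
    (pv : Fin 2 → ℝ) (hpv : pv = ![p, 1 - p])
    -- the pure bipartite input state ψ_AB = √p e₁ ⊗ u₁ + √(1−p) e₂ ⊗ u₂
    (ψ : Fin 2 × Fin 2 → ℂ) (hψ : ψ = fun x => (Real.sqrt (pv x.1) : ℂ) * u x.1 x.2)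
    -- the reduced state of the particle
    (ρA : Matrix (Fin 2) (Fin 2) ℂ)
    (hρA : ρA = Matrix.of fun i k => (Real.sqrt (pv i * pv k) : ℂ) * ip (u k) (u i))
    -- the normalized concurrence squared E(ψ_AB)² = (1/2)(1 − Tr((Tr_B ψψ^*)²))
    (Esq : ℝ) (hE : Esq = (1 / 2) * (1 - purity (ptraceB (vecMulVec ψ (star ψ)))))
    -- the post-interaction bipartite state
    (ρtAB : Matrix (Fin 2 × Fin 2) (Fin 2 × Fin 2) ℂ)
    (hρtAB : ρtAB = Matrix.of fun x y =>
      (Real.sqrt (pv x.1 * pv y.1) : ℂ) * ip (d y.1) (d x.1) * u x.1 x.2 * star (u y.1 y.2)) :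
    (Ps d pv - 1 / 2) ^ 2 + (Vis d ρA) ^ 2 + Esq
        = 1 / 4 + p * (1 - p) * (cu - 1) * (cd - 1) ∧
      3 / 4 - (1 / 2) * purity ρtAB = 1 / 4 + p * (1 - p) * (1 - cd) := by
  have hq0 : (0:ℝ) ≤ 1 - p := by linarith
  have hpv0 : pv 0 = p := by rw [hpv]; rfl
  have hpv1 : pv 1 = 1 - p := by rw [hpv]; rfl
  have hpvnn : ∀ i, 0 ≤ pv i := by
    intro i; fin_cases i <;> simp [hpv] <;> linarith
  have hcd0 : 0 ≤ cd := by rw [hcd]; positivity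
  have hcu0 : 0 ≤ cu := by rw [hcu]; positivity
  have hcd1 : cd ≤ 1 := by
    have h := ip_cauchy (d 0) (d 1)
    rw [hd 0, hd 1] at h
    rw [hcd]; simpa using h
  have hcu1 : cu ≤ 1 := by
    have h := ip_cauchy (u 0) (u 1)
    rw [hu 0, hu 1] at h
    rw [hcu]; simpa using h
  have h4 : 0 ≤ 1 - 4*p*(1-p)*cd := by
    nlinarith [sq_nonneg (p - (1-p)), mul_nonneg (mul_nonneg hp0 hq0) (sub_nonneg.2 hcd1)]
  -- coercion facts
  have hA : ((Real.sqrt (pv 0 * pv 0) : ℝ) : ℂ) = (p : ℂ) := by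
    rw [hpv0, Real.sqrt_mul_self hp0]
  have hB : ((Real.sqrt (pv 1 * pv 1) : ℝ) : ℂ) = ((1 - p : ℝ) : ℂ) := by
    rw [hpv1, Real.sqrt_mul_self hq0]
  have hC : ((Real.sqrt (pv 0 * pv 1) : ℝ) : ℂ) * ((Real.sqrt (pv 1 * pv 0) : ℝ) : ℂ)
      = ((p * (1 - p) : ℝ) : ℂ) := by
    rw [hpv0, hpv1, mul_comm (1-p) p, ← Complex.ofReal_mul,
      Real.mul_self_sqrt (by nlinarith : (0:ℝ) ≤ p * (1-p))]
  have hUC : ip (u 1) (u 0) * ip (u 0) (u 1) = ((cu : ℝ) : ℂ) := by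
    rw [← ip_conj (u 0) (u 1), Complex.star_def, mul_comm, Complex.mul_conj, hcu,
      Complex.normSq_eq_norm_sq]
  have hGC : ip (d 1) (d 0) * ip (d 0) (d 1) = ((cd : ℝ) : ℂ) := by
    rw [← ip_conj (d 0) (d 1), Complex.star_def, mul_comm, Complex.mul_conj, hcd,
      Complex.normSq_eq_norm_sq]
  push_cast at hA hB hC hUC hGC
  -- Ps
  have hPs : Ps d pv = (1 + Real.sqrt (1 - 4*p*(1-p)*cd))/2 := by
    rw [hpv, hcd]; exact helstrom d hd p hp0 hp1
  have hPsq : (Ps d pv - 1/2)^2 = (1 - 4*p*(1-p)*cd)/4 := by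
    have h5 : Ps d pv - 1/2 = Real.sqrt (1 - 4*p*(1-p)*cd)/2 := by rw [hPs]; ring
    rw [h5, div_pow, Real.sq_sqrt h4]
    norm_num
  -- Visibility
  have hnd : ‖ip (d 1) (d 0)‖ = ‖ip (d 0) (d 1)‖ := by
    rw [← ip_conj (d 0) (d 1)]; exact norm_star _
  have hnu : ‖ip (u 1) (u 0)‖ = ‖ip (u 0) (u 1)‖ := by
    rw [← ip_conj (u 0) (u 1)]; exact norm_star _
  have hρ01 : ‖ρA 0 1‖^2 = p*(1-p)*cu := by
    rw [hρA]
    simp only [Matrix.of_apply]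
    rw [norm_mul, mul_pow, Complex.norm_real, Real.norm_eq_abs,
      abs_of_nonneg (Real.sqrt_nonneg _), Real.sq_sqrt (mul_nonneg (hpvnn 0) (hpvnn 1)),
      hpv0, hpv1, hnu, ← hcu]
  have hρ10 : ‖ρA 1 0‖^2 = p*(1-p)*cu := by
    rw [hρA]
    simp only [Matrix.of_apply]
    rw [norm_mul, mul_pow, Complex.norm_real, Real.norm_eq_abs,
      abs_of_nonneg (Real.sqrt_nonneg _), Real.sq_sqrt (mul_nonneg (hpvnn 1) (hpvnn 0)),
      hpv0, hpv1, ← hcu]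
    ring
  have hVarg : (2 * (((2:ℕ) : ℝ) - 1) / ((2:ℕ) : ℝ) ^ 2) *
      (∑ i, ∑ k, if i = k then 0 else ‖ip (d k) (d i)‖ ^ 2 * ‖ρA i k‖ ^ 2)
      = p*(1-p)*(cd*cu) := by
    rw [Fin.sum_univ_two, Fin.sum_univ_two, Fin.sum_univ_two]
    norm_num
    rw [hρ01, hρ10, hnd, ← hcd]
    ring
  have hVis : (Vis d ρA)^2 = p*(1-p)*(cd*cu) := by
    rw [Vis, Real.sq_sqrt]
    · exact hVarg
    · rw [hVarg]; nlinarith [mul_nonneg hcd0 hcu0, mul_nonneg hp0 hq0,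
        mul_nonneg (mul_nonneg hp0 hq0) (mul_nonneg hcd0 hcu0)]
  -- concurrence
  have hpt : ptraceB (vecMulVec ψ (star ψ)) = ρA := by
    rw [hψ, hρA]
    ext i k
    have hr : ((Real.sqrt (pv i * pv k) : ℝ) : ℂ)
        = ((Real.sqrt (pv i) : ℝ) : ℂ) * ((Real.sqrt (pv k) : ℝ) : ℂ) := by
      rw [← Complex.ofReal_mul, Real.sqrt_mul (hpvnn i)]
    simp only [ptraceB, Matrix.of_apply, vecMulVec_apply, Pi.star_apply, ip,
      Fin.sum_univ_two, star_mul', Complex.star_def, Complex.conj_ofReal]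
    rw [hr]
    ring
  have hpurA : purity ρA = p^2 + (1-p)^2 + 2*(p*(1-p))*cu := by
    have htr : (ρA * ρA).trace = ((p^2 + (1-p)^2 + 2*(p*(1-p))*cu : ℝ) : ℂ) := by
      rw [hρA]
      simp only [Matrix.trace, Matrix.diag_apply, Matrix.mul_apply, Matrix.of_apply,
        Fin.sum_univ_two]
      rw [hu 0, hu 1]
      push_cast
      linear_combination (((Real.sqrt (pv 0 * pv 0) : ℝ) : ℂ) + (p:ℂ)) * hA
        + (((Real.sqrt (pv 1 * pv 1) : ℝ) : ℂ) + ((1:ℂ) - (p:ℂ))) * hB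
        + (2 * ip (u 1) (u 0) * ip (u 0) (u 1)) * hC
        + (2 * (p:ℂ) * ((1:ℂ) - (p:ℂ))) * hUC
    rw [purity, htr, Complex.ofReal_re]
  have hEval : Esq = p*(1-p)*(1-cu) := by
    rw [hE, hpt, hpurA]; ring
  -- purity of the post-interaction bipartite state
  have h0 := hu 0
  have h1 := hu 1
  simp only [ip, Fin.sum_univ_two] at h0 h1
  have hpurT : purity ρtAB = p^2 + (1-p)^2 + 2*(p*(1-p))*cd := by
    have htr : (ρtAB * ρtAB).trace = ((p^2 + (1-p)^2 + 2*(p*(1-p))*cd : ℝ) : ℂ) := by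
      rw [hρtAB]
      simp only [Matrix.trace, Matrix.diag_apply, Matrix.mul_apply, Matrix.of_apply,
        Fintype.sum_prod_type, Fin.sum_univ_two]
      rw [hd 0, hd 1]
      push_cast
      linear_combination
        ((((Real.sqrt (pv 0 * pv 0) : ℝ) : ℂ) + (p:ℂ))
            * (star (u 0 0) * u 0 0 + star (u 0 1) * u 0 1)^2) * hA
        + ((((Real.sqrt (pv 1 * pv 1) : ℝ) : ℂ) + ((1:ℂ) - (p:ℂ)))
            * (star (u 1 0) * u 1 0 + star (u 1 1) * u 1 1)^2) * hB
        + (2 * (ip (d 1) (d 0) * ip (d 0) (d 1))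
            * (star (u 0 0) * u 0 0 + star (u 0 1) * u 0 1)
            * (star (u 1 0) * u 1 0 + star (u 1 1) * u 1 1)) * hC
        + (2 * (p:ℂ) * ((1:ℂ) - (p:ℂ))
            * (star (u 0 0) * u 0 0 + star (u 0 1) * u 0 1)
            * (star (u 1 0) * u 1 0 + star (u 1 1) * u 1 1)) * hGC
        + ((p:ℂ)^2 * ((star (u 0 0) * u 0 0 + star (u 0 1) * u 0 1) + 1)
            + 2 * (p:ℂ) * ((1:ℂ) - (p:ℂ)) * (cd:ℂ)
              * (star (u 1 0) * u 1 0 + star (u 1 1) * u 1 1)) * h0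
        + (((1:ℂ) - (p:ℂ))^2 * ((star (u 1 0) * u 1 0 + star (u 1 1) * u 1 1) + 1)
            + 2 * (p:ℂ) * ((1:ℂ) - (p:ℂ)) * (cd:ℂ)) * h1
    rw [purity, htr, Complex.ofReal_re]
  constructor
  · rw [hPsq, hVis, hEval]; ring
  · rw [hpurT]; ring
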